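/- Every positive integer can be written as a sum of a practical number and a triangular number (where 0 is allowed as a triangular number). -/

import Mathlib

def Practical (n : ℕ) : Prop :=
  0 < n ∧ ∀ m : ℕ, 0 < m → m ≤ n → ∃ S : Finset ℕ, (∀ d ∈ S, d ∣ n) ∧ ∑ d ∈ S, d = m

/-- Every `t < 2^n` is a sum of distinct powers of two with exponents below `n`. -/
lemma binary_rep (n : ℕ) : ∀ t, t < 2 ^ n → ∃ S ⊆ Finset.range n, ∑ i ∈ S, 2 ^ i = t := by
  induction n with
  | zero =>
    intro t ht
    interval_cases t
    exact ⟨∅, by simp, by simp⟩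
  | succ n ih =>
    intro t ht
    by_cases h : t < 2 ^ n
    · obtain ⟨S, hS, hsum⟩ := ih t h
      exact ⟨S, hS.trans (Finset.range_subset_range.mpr (Nat.le_succ n)), hsum⟩
    · have h2 : 2 ^ (n + 1) = 2 * 2 ^ n := by ring
      obtain ⟨S, hS, hsum⟩ := ih (t - 2 ^ n) (by omega)
      have hnS : n ∉ S := fun hmem => by simpa using hS hmem
      refine ⟨insert n S, ?_, ?_⟩
      · intro x hx
        rcases Finset.mem_insert.mp hx with rfl | hx
        · exact Finset.self_mem_range_succ x
        · exact (Finset.range_subset_range.mpr (Nat.le_succ n)) (hS hx)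
      · rw [Finset.sum_insert hnS, hsum]; omega

/-- If `q` is odd and `q ≤ 2^(a+1)` then `2^a * q` is practical. -/
lemma practical_pow_mul (a q : ℕ) (hodd : Odd q) (hq : q ≤ 2 ^ (a + 1)) :
    Practical (2 ^ a * q) := by
  have hq0 : 0 < q := hodd.pos
  refine ⟨by positivity, ?_⟩
  intro m hm hmle
  by_cases hq1 : q = 1
  · subst hq1
    obtain ⟨S, hS, hsum⟩ := binary_rep (a + 1) m
      (lt_of_le_of_lt (by simpa using hmle) (Nat.pow_lt_pow_right one_lt_two (Nat.lt_succ_self a)))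
    refine ⟨S.image (fun i => 2 ^ i), ?_, ?_⟩
    · intro d hd
      obtain ⟨i, hi, rfl⟩ := Finset.mem_image.mp hd
      have : i ≤ a := by have := Finset.mem_range.mp (hS hi); omega
      simpa using pow_dvd_pow 2 this
    · rw [Finset.sum_image (fun i _ j _ h => Nat.pow_right_injective le_rfl h)]
      exact hsum
  · have hq3 : 3 ≤ q := by
      rcases hodd with ⟨c, rfl⟩; omega
    set s := m / q with hs_def
    set r := m % q with hr_def
    have hr : r < q := Nat.mod_lt _ hq0
    have hs : s ≤ 2 ^ a := by
      have := Nat.div_le_div_right (c := q) hmle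
      rwa [Nat.mul_div_cancel _ hq0] at this
    obtain ⟨S, hS, hSsum⟩ := binary_rep (a + 1) s
      (lt_of_le_of_lt hs (Nat.pow_lt_pow_right one_lt_two (Nat.lt_succ_self a)))
    obtain ⟨R, hR, hRsum⟩ := binary_rep (a + 1) r (lt_of_lt_of_le hr hq)
    have hqnotdvd : ∀ j : ℕ, ¬ q ∣ 2 ^ j := by
      intro j hdvd
      have h2q : ¬ (2 ∣ q) := by
        have := Nat.odd_iff.mp hodd; omega
      have hcop : Nat.Coprime q 2 :=
        Nat.coprime_comm.mp (Nat.Prime.coprime_iff_not_dvd Nat.prime_two |>.mpr h2q)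
      exact hq1 (Nat.Coprime.eq_one_of_dvd (hcop.pow_right j) hdvd)
    have hdisj : Disjoint (S.image (fun i => 2 ^ i * q)) (R.image (fun i => 2 ^ i)) := by
      rw [Finset.disjoint_left]
      intro x hx1 hx2
      obtain ⟨i, _, rfl⟩ := Finset.mem_image.mp hx1
      obtain ⟨j, _, hji⟩ := Finset.mem_image.mp hx2
      exact hqnotdvd j ⟨2 ^ i, hji.trans (mul_comm _ _)⟩
    refine ⟨(S.image (fun i => 2 ^ i * q)) ∪ (R.image (fun i => 2 ^ i)), ?_, ?_⟩
    · intro d hd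
      rcases Finset.mem_union.mp hd with hd | hd
      · obtain ⟨i, hi, rfl⟩ := Finset.mem_image.mp hd
        have : i ≤ a := by have := Finset.mem_range.mp (hS hi); omega
        exact mul_dvd_mul (pow_dvd_pow 2 this) dvd_rfl
      · obtain ⟨i, hi, rfl⟩ := Finset.mem_image.mp hd
        have : i ≤ a := by have := Finset.mem_range.mp (hR hi); omega
        exact dvd_mul_of_dvd_left (pow_dvd_pow 2 this) q
    · rw [Finset.sum_union hdisj,
        Finset.sum_image (fun i _ j _ h => Nat.pow_right_injective le_rfl
          (Nat.eq_of_mul_eq_mul_right hq0 h)),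
        Finset.sum_image (fun i _ j _ h => Nat.pow_right_injective le_rfl h),
        ← Finset.sum_mul, hSsum, hRsum]
      exact Nat.div_add_mod' m q

/-- Practicality criterion: `2^a ∣ m` and `m ≤ 2^(2a+1)` imply `m` practical. -/
lemma practical_of_dvd_le (m a : ℕ) (h1 : 0 < m) (h2 : 2 ^ a ∣ m)
    (h3 : m ≤ 2 ^ (2 * a + 1)) : Practical m := by
  set v := m.factorization 2 with hv
  set q := m / 2 ^ v with hqdef
  have hself : 2 ^ v * q = m := Nat.ordProj_mul_ordCompl_eq_self m 2
  have hodd : Odd q := by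
    have h2q : ¬ (2 ∣ q) := Nat.not_dvd_ordCompl Nat.prime_two h1.ne'
    rw [Nat.odd_iff]
    omega
  have hav : a ≤ v := (Nat.Prime.pow_dvd_iff_le_factorization Nat.prime_two h1.ne').mp h2
  have hqle : q ≤ 2 ^ (v + 1) := by
    have hle : 2 ^ v * q ≤ 2 ^ v * 2 ^ (v + 1) := by
      rw [hself, ← pow_add]
      exact h3.trans (Nat.pow_le_pow_right (by norm_num) (by omega))
    exact Nat.le_of_mul_le_mul_left hle (Nat.pow_pos (n := v) (by norm_num))
  have := practical_pow_mul v q hodd hqle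
  rwa [hself] at this

/-- Triangular numbers cover all residues mod powers of two (in product form). -/
lemma tri_mod (a : ℕ) : ∀ r : ℤ, ∃ k : ℕ, k < 2 ^ a ∧
    (2 ^ (a + 1) : ℤ) ∣ ((k : ℤ) * (k + 1) - 2 * r) := by
  induction a with
  | zero => exact fun r => ⟨0, by norm_num, ⟨-r, by ring⟩⟩
  | succ a ih =>
    intro r
    obtain ⟨k, hk, t, ht⟩ := ih r
    rcases Int.even_or_odd t with ⟨u, hu⟩ | ⟨u, hu⟩
    · exact ⟨k, lt_trans hk (Nat.pow_lt_pow_right one_lt_two (Nat.lt_succ_self a)),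
        ⟨u, by rw [hu] at ht; linear_combination ht⟩⟩
    · have hpow : (1 : ℕ) ≤ 2 ^ a := Nat.one_le_two_pow
      have hpow2 : 2 ^ (a + 1) = 2 * 2 ^ a := by ring
      refine ⟨2 ^ (a + 1) - 1 - k, by omega, ?_⟩
      have hc : ((2 ^ (a + 1) - 1 - k : ℕ) : ℤ) + k + 1 = 2 ^ (a + 1) := by
        have : (2 ^ (a + 1) - 1 - k : ℕ) + k + 1 = 2 ^ (a + 1) := by omega
        exact_mod_cast congrArg (Nat.cast : ℕ → ℤ) this
      refine ⟨2 ^ a + u - k, ?_⟩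
      rw [hu] at ht
      linear_combination (((2 ^ (a + 1) - 1 - k : ℕ) : ℤ) + 2 ^ (a + 1) - k) * hc + ht

theorem stmt_3 (n : ℕ) (hn : 0 < n) :
    ∃ p k : ℕ, Practical p ∧ n = p + k * (k + 1) / 2 := by
  have hex : ∃ a, n ≤ 2 ^ (2 * a + 1) := by
    refine ⟨n, le_of_lt ?_⟩
    calc n < 2 ^ n := Nat.lt_two_pow_self (n := n)
    _ ≤ 2 ^ (2 * n + 1) := Nat.pow_le_pow_right (by norm_num) (by omega)
  obtain ⟨a, ha, hamin⟩ : ∃ a, n ≤ 2 ^ (2 * a + 1) ∧ ∀ b < a, ¬ n ≤ 2 ^ (2 * b + 1) :=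
    ⟨Nat.find hex, Nat.find_spec hex, fun b hb => Nat.find_min hex hb⟩
  obtain ⟨k, hk, hdvd⟩ := tri_mod a n
  set T := k * (k + 1) / 2 with hT_def
  have h2T : 2 * T = k * (k + 1) := by
    have : 2 ∣ k * (k + 1) := (Nat.even_mul_succ_self k).two_dvd
    omega
  have hTn : T < n := by
    rcases Nat.eq_zero_or_pos a with ha0 | hapos
    · rw [ha0] at hk
      norm_num at hk
      subst hk
      omega
    · have hmin : ¬ n ≤ 2 ^ (2 * (a - 1) + 1) := hamin (a - 1) (by omega)
      have hmin' : 2 ^ (2 * a - 1) < n := by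
        rw [show 2 * (a - 1) + 1 = 2 * a - 1 from by omega] at hmin
        omega
      have hxx : 2 ^ a * 2 ^ a = 2 * 2 ^ (2 * a - 1) := by
        rw [← pow_add, ← pow_succ']
        congr 1
        omega
      have hk1 : k + 1 ≤ 2 ^ a := hk
      nlinarith [h2T, hxx, hmin', Nat.mul_le_mul hk.le hk1]
  have hdvd' : 2 ^ a ∣ n - T := by
    have h1 : (2 ^ (a + 1) : ℤ) ∣ (2 * (T : ℤ) - 2 * n) := by
      have : ((k : ℤ) * (k + 1)) = 2 * (T : ℤ) := by exact_mod_cast h2T.symm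
      rwa [this] at hdvd
    have h2 : (2 ^ a : ℤ) ∣ ((T : ℤ) - n) := by
      obtain ⟨c, hc⟩ := h1
      refine ⟨c, ?_⟩
      have hp : (2 ^ (a + 1) : ℤ) = 2 * 2 ^ a := by ring
      rw [hp] at hc
      linarith
    have h3 : (2 ^ a : ℤ) ∣ ((n : ℤ) - T) := (dvd_sub_comm).mp h2
    have h4 : ((n - T : ℕ) : ℤ) = (n : ℤ) - T := by
      push_cast [Nat.cast_sub hTn.le]
      ring
    exact_mod_cast h4 ▸ h3
  refine ⟨n - T, k, ?_, by omega⟩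
  exact practical_of_dvd_le (n - T) a (by omega) hdvd' (by omega)
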